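/- Let k be a field, H a Hopf algebra over k, and I a left ideal coideal of H. Then the linear map ζ : H ⊗_k H^{co H/I} → H ⊗_k H defined by ζ(x ⊗ b) = Σ x₍₁₎ ⊗ x₍₂₎b is injective and its image is exactly the cotensor product H □^{H/I} H; in particular ζ gives a linear isomorphism H ⊗_k H^{co H/I} ≅ H □^{H/I} H. -/

import Mathlib

open TensorProduct

set_option synthInstance.maxHeartbeats 400000
set_option maxHeartbeats 1000000

noncomputable section

namespace HopfGalois

-- ===================== statement-provided definitions =====================

variable (k : Type*) (H : Type*) [Field k] [Ring H] [HopfAlgebra k H]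

/-- The linear map `H ⊗ H → H`, `x ⊗ y ↦ ε(x) • y`. -/
def epsTensorId : H ⊗[k] H →ₗ[k] H :=
  (TensorProduct.lid k H).toLinearMap ∘ₗ
    TensorProduct.map (Coalgebra.counit : H →ₗ[k] k) (LinearMap.id : H →ₗ[k] H)

/-- The linear map `H ⊗ H → H`, `x ⊗ y ↦ ε(y) • x`. -/
def idTensorEps : H ⊗[k] H →ₗ[k] H :=
  (TensorProduct.rid k H).toLinearMap ∘ₗ
    TensorProduct.map (LinearMap.id : H →ₗ[k] H) (Coalgebra.counit : H →ₗ[k] k)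

/-- `x ⊗ y ↦ Σ x₍₁₎ ⊗ π_I(x₍₂₎) ⊗ y`. -/
def cotensorL (I : Submodule k H) : H ⊗[k] H →ₗ[k] H ⊗[k] ((H ⧸ I) ⊗[k] H) :=
  TensorProduct.map (LinearMap.id : H →ₗ[k] H)
      (TensorProduct.map I.mkQ (LinearMap.id : H →ₗ[k] H))
    ∘ₗ (TensorProduct.assoc k H H H).toLinearMap
    ∘ₗ TensorProduct.map (Coalgebra.comul : H →ₗ[k] H ⊗[k] H) (LinearMap.id : H →ₗ[k] H)

/-- `x ⊗ y ↦ Σ x ⊗ π_I(y₍₁₎) ⊗ y₍₂₎`. -/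
def cotensorR (I : Submodule k H) : H ⊗[k] H →ₗ[k] H ⊗[k] ((H ⧸ I) ⊗[k] H) :=
  TensorProduct.map (LinearMap.id : H →ₗ[k] H)
    (TensorProduct.map I.mkQ (LinearMap.id : H →ₗ[k] H)
      ∘ₗ (Coalgebra.comul : H →ₗ[k] H ⊗[k] H))

/-- The cotensor product `H □^{H/I} H` as a subspace of `H ⊗ H`. -/
def cotensor (I : Submodule k H) : Submodule k (H ⊗[k] H) :=
  LinearMap.ker (cotensorL k H I - cotensorR k H I)

/-- The subspace of coinvariants `H^{co H/I}`:
`{x ∈ H : Σ π_I(x₍₁₎) ⊗ x₍₂₎ = π_I(1) ⊗ x}`. -/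
def coinv (I : Submodule k H) : Submodule k H :=
  LinearMap.ker
    ((TensorProduct.map I.mkQ (LinearMap.id : H →ₗ[k] H)
        ∘ₗ (Coalgebra.comul : H →ₗ[k] H ⊗[k] H))
      - TensorProduct.mk k (H ⧸ I) H (I.mkQ 1))

/-- A left ideal coideal: a left ideal `I` with `ε(I) = 0` and `Δ(I) ⊆ I ⊗ H + H ⊗ I`. -/
structure IsLeftIdealCoideal (I : Submodule k H) : Prop where
  mul_mem_left : ∀ (h x : H), x ∈ I → h * x ∈ I
  counit_zero : ∀ x ∈ I, (Coalgebra.counit : H →ₗ[k] k) x = 0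
  comul_mem : ∀ x ∈ I, (Coalgebra.comul : H →ₗ[k] H ⊗[k] H) x ∈
    LinearMap.range (TensorProduct.map I.subtype (LinearMap.id : H →ₗ[k] H)) ⊔
      LinearMap.range (TensorProduct.map (LinearMap.id : H →ₗ[k] H) I.subtype)

/-- A right coideal subalgebra: a subalgebra `B` with `Δ(B) ⊆ B ⊗ H`. -/
def IsRightCoidealSubalgebra (B : Subalgebra k H) : Prop :=
  ∀ b ∈ B, (Coalgebra.comul : H →ₗ[k] H ⊗[k] H) b ∈
    LinearMap.range
      (TensorProduct.map (Subalgebra.toSubmodule B).subtype (LinearMap.id : H →ₗ[k] H))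

/-- The left ideal of `H` generated by a subset `S`, as a `k`-subspace of `H`. -/
def leftIdealGen (S : Set H) : Submodule k H :=
  Submodule.span k {z : H | ∃ h : H, ∃ b ∈ S, z = h * b}

/-- `S⁺ = S ∩ ker ε`. -/
def plusPart (S : Set H) : Set H :=
  {b ∈ S | (Coalgebra.counit : H →ₗ[k] k) b = 0}

/-- `H·S⁺`, the left ideal of `H` generated by `S ∩ ker ε`. -/
def HSplus (S : Set H) : Submodule k H :=
  leftIdealGen k H (plusPart k H S)

/-- The subspace `J_B ⊆ H ⊗ H` spanned by `{xb ⊗ y − x ⊗ by : x, y ∈ H, b ∈ B}`,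
so that `H ⊗_B H = (H ⊗ H)/J_B`. -/
def JB (S : Set H) : Submodule k (H ⊗[k] H) :=
  Submodule.span k
    {z : H ⊗[k] H | ∃ x y : H, ∃ b ∈ S, z = (x * b) ⊗ₜ[k] y - x ⊗ₜ[k] (b * y)}

/-- `B` is the equalizer of the two canonical maps `H → H ⊗_B H`. -/
def equalizerCond (S : Set H) : Prop :=
  {h : H | h ⊗ₜ[k] (1 : H) - (1 : H) ⊗ₜ[k] h ∈ JB k H S} = S

/-- `H/I` is the coequalizer of `ε ⊗ id` and `id ⊗ ε` restricted to `H □^{H/I} H`, i.e.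
`I` is the subspace spanned by `{Σ ε(xᵢ)yᵢ − Σ xᵢε(yᵢ) : Σ xᵢ ⊗ yᵢ ∈ H □^{H/I} H}`. -/
def coequalizerCond (I : Submodule k H) : Prop :=
  I = Submodule.map (epsTensorId k H - idTensorEps k H) (cotensor k H I)


/-- The linear map `ζ : H ⊗ H^{co H/I} → H ⊗ H`, `x ⊗ b ↦ Σ x₍₁₎ ⊗ x₍₂₎b`. -/
def zeta (k H : Type*) [Field k] [Ring H] [HopfAlgebra k H] (I : Submodule k H) :
    H ⊗[k] ↥(coinv k H I) →ₗ[k] H ⊗[k] H :=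
  TensorProduct.map (LinearMap.id : H →ₗ[k] H) (LinearMap.mul' k H)
    ∘ₗ (TensorProduct.assoc k H H H).toLinearMap
    ∘ₗ TensorProduct.map (Coalgebra.comul : H →ₗ[k] H ⊗[k] H) (coinv k H I).subtype

-- ===================== auxiliary general theory =====================
section Aux

open Coalgebra LinearMap

variable {k H : Type*} [Field k] [Ring H] [HopfAlgebra k H]
variable {M : Type*} [AddCommGroup M] [Module k M]

/-- `x ⊗ m ↦ Σ x₁ ⊗ ρ(f(x₂) ⊗ m)`. -/
noncomputable def Tmap (ρ : H ⊗[k] M →ₗ[k] M) (f : H →ₗ[k] H) : H ⊗[k] M →ₗ[k] H ⊗[k] M :=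
  lTensor H ρ ∘ₗ (TensorProduct.assoc k H H M).toLinearMap
    ∘ₗ rTensor M (lTensor H f ∘ₗ (comul : H →ₗ[k] H ⊗[k] H))

lemma Tmap_tmul (ρ : H ⊗[k] M →ₗ[k] M) (f : H →ₗ[k] H) (x : H) (m : M) (r : Repr k x (H × H)) :
    Tmap ρ f (x ⊗ₜ m) = ∑ i ∈ r.index, r.left i ⊗ₜ ρ (f (r.right i) ⊗ₜ m) := by
  simp only [Tmap, coe_comp, Function.comp_apply, rTensor_tmul, LinearEquiv.coe_coe,
    comp_apply, ← r.eq, map_sum, lTensor_tmul, sum_tmul, assoc_tmul]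

lemma Tmap_comp (ρ : H ⊗[k] M →ₗ[k] M)
    (hassoc : ∀ (a b : H) (m : M), ρ ((a * b) ⊗ₜ m) = ρ (a ⊗ₜ ρ (b ⊗ₜ m)))
    (f g : H →ₗ[k] H) :
    Tmap ρ f ∘ₗ Tmap ρ g
      = Tmap ρ (LinearMap.mul' k H ∘ₗ TensorProduct.map f g ∘ₗ (comul : H →ₗ[k] H ⊗[k] H)) := by
  apply TensorProduct.ext'
  intro x m
  set r := ℛ k x
  set r1 : (i : r.ι) → Repr k (r.left i) (H × H) := fun i => ℛ k (r.left i) with hr1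
  set r2 : (i : r.ι) → Repr k (r.right i) (H × H) := fun i => ℛ k (r.right i) with hr2
  have key := congrArg (lTensor H (ρ ∘ₗ ((TensorProduct.mk k H M).flip m)
      ∘ₗ LinearMap.mul' k H ∘ₗ TensorProduct.map f g)) (sum_tmul_tmul_eq r r1 r2)
  simp only [map_sum, lTensor_tmul, coe_comp, Function.comp_apply, map_tmul,
    mul'_apply, flip_apply, mk_apply] at key
  calc (Tmap ρ f ∘ₗ Tmap ρ g) (x ⊗ₜ m)
      = Tmap ρ f (∑ i ∈ r.index, r.left i ⊗ₜ ρ (g (r.right i) ⊗ₜ m)) := by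
        rw [comp_apply, Tmap_tmul ρ g x m r]
    _ = ∑ i ∈ r.index, ∑ j ∈ (r1 i).index,
          (r1 i).left j ⊗ₜ ρ ((f ((r1 i).right j) * g (r.right i)) ⊗ₜ m) := by
        rw [map_sum]
        refine Finset.sum_congr rfl fun i _ => ?_
        rw [Tmap_tmul ρ f _ _ (r1 i)]
        exact Finset.sum_congr rfl fun j _ => by rw [hassoc]
    _ = ∑ i ∈ r.index, ∑ j ∈ (r2 i).index,
          r.left i ⊗ₜ ρ ((f ((r2 i).left j) * g ((r2 i).right j)) ⊗ₜ m) := key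
    _ = Tmap ρ (LinearMap.mul' k H ∘ₗ TensorProduct.map f g ∘ₗ comul) (x ⊗ₜ m) := by
        rw [Tmap_tmul _ _ x m r]
        refine Finset.sum_congr rfl fun i _ => ?_
        rw [comp_apply, comp_apply, ← (r2 i).eq, map_sum, map_sum, sum_tmul, map_sum, tmul_sum]
        exact Finset.sum_congr rfl fun j _ => by simp

lemma Tmap_counit (ρ : H ⊗[k] M →ₗ[k] M) (hone : ∀ m : M, ρ ((1 : H) ⊗ₜ m) = m) :
    Tmap ρ ((Algebra.linearMap k H) ∘ₗ (counit : H →ₗ[k] k)) = LinearMap.id := by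
  apply TensorProduct.ext'
  intro x m
  set r := ℛ k x
  rw [Tmap_tmul _ _ x m r]
  have key := congrArg (TensorProduct.rid k H) (sum_tmul_counit_eq r)
  simp only [map_sum, rid_tmul] at key
  calc ∑ i ∈ r.index, r.left i ⊗ₜ ρ ((Algebra.linearMap k H ∘ₗ counit) (r.right i) ⊗ₜ m)
      = ∑ i ∈ r.index, (counit (R := k) (r.right i) • r.left i) ⊗ₜ[k] m := by
        refine Finset.sum_congr rfl fun i _ => ?_
        rw [comp_apply, Algebra.linearMap_apply, Algebra.algebraMap_eq_smul_one]
        rw [← smul_tmul', map_smul, hone, tmul_smul, smul_tmul']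
    _ = x ⊗ₜ m := by rw [← sum_tmul, key, one_smul]

lemma Tmap_antipode_id (ρ : H ⊗[k] M →ₗ[k] M)
    (hone : ∀ m : M, ρ ((1 : H) ⊗ₜ m) = m)
    (hassoc : ∀ (a b : H) (m : M), ρ ((a * b) ⊗ₜ m) = ρ (a ⊗ₜ ρ (b ⊗ₜ m))) :
    Tmap ρ (HopfAlgebra.antipode (R := k)) ∘ₗ Tmap ρ LinearMap.id = LinearMap.id := by
  rw [Tmap_comp ρ hassoc]
  rw [show TensorProduct.map (HopfAlgebra.antipode (R := k) (A := H)) LinearMap.id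
      = (HopfAlgebra.antipode (R := k) (A := H)).rTensor H from rfl]
  rw [HopfAlgebra.mul_antipode_rTensor_comul, Tmap_counit ρ hone]

lemma Tmap_id_antipode (ρ : H ⊗[k] M →ₗ[k] M)
    (hone : ∀ m : M, ρ ((1 : H) ⊗ₜ m) = m)
    (hassoc : ∀ (a b : H) (m : M), ρ ((a * b) ⊗ₜ m) = ρ (a ⊗ₜ ρ (b ⊗ₜ m))) :
    Tmap ρ LinearMap.id ∘ₗ Tmap ρ (HopfAlgebra.antipode (R := k)) = LinearMap.id := by
  rw [Tmap_comp ρ hassoc]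
  rw [show TensorProduct.map LinearMap.id (HopfAlgebra.antipode (R := k) (A := H))
      = (HopfAlgebra.antipode (R := k) (A := H)).lTensor H from rfl]
  rw [HopfAlgebra.mul_antipode_lTensor_comul, Tmap_counit ρ hone]

lemma Tmap_tmul' (ρ : H ⊗[k] M →ₗ[k] M) (f : H →ₗ[k] H) (x : H) (m : M)
    {ι : Type*} {s : Finset ι} {u v : ι → H}
    (hx : (comul (R := k) x) = ∑ i ∈ s, u i ⊗ₜ[k] v i) :
    Tmap ρ f (x ⊗ₜ m) = ∑ i ∈ s, u i ⊗ₜ ρ (f (v i) ⊗ₜ m) := by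
  simp only [Tmap, coe_comp, Function.comp_apply, rTensor_tmul, LinearEquiv.coe_coe,
    comp_apply, hx, map_sum, lTensor_tmul, sum_tmul, assoc_tmul]

lemma comul_mul_expand {a b : H} (ra : Repr k a (H × H)) (rb : Repr k b (H × H)) :
    (comul (R := k) (a * b)) = ∑ p ∈ ra.index ×ˢ rb.index,
      (ra.left p.1 * rb.left p.2) ⊗ₜ[k] (ra.right p.1 * rb.right p.2) := by
  rw [Bialgebra.comul_mul, ← ra.eq, ← rb.eq, Finset.sum_mul_sum, Finset.sum_product]
  simp [Algebra.TensorProduct.tmul_mul_tmul]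

end Aux

-- ===================== auxiliary lemmas about the concrete maps =====================
section Concrete

open Coalgebra LinearMap

variable {k H}
variable {I : Submodule k H}

/-- The action of `H` on `H ⧸ I`, curried form. -/
noncomputable def actL (hI : IsLeftIdealCoideal k H I) : H →ₗ[k] (H ⧸ I) →ₗ[k] H ⧸ I where
  toFun h := I.liftQ (I.mkQ ∘ₗ LinearMap.mulLeft k h) (fun x hx => by
    simp only [LinearMap.mem_ker, coe_comp, Function.comp_apply, LinearMap.mulLeft_apply,
      Submodule.mkQ_apply, Submodule.Quotient.mk_eq_zero]
    exact hI.mul_mem_left h x hx)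
  map_add' a b := by
    refine Submodule.linearMap_qext I ?_
    ext x
    simp [add_mul]
  map_smul' c a := by
    refine Submodule.linearMap_qext I ?_
    ext x
    simp [smul_mul_assoc]

/-- The action of `H` on `H ⧸ I`. -/
noncomputable def act (hI : IsLeftIdealCoideal k H I) : H ⊗[k] (H ⧸ I) →ₗ[k] H ⧸ I :=
  TensorProduct.lift (actL hI)

lemma act_tmul_mk (hI : IsLeftIdealCoideal k H I) (h y : H) :
    act hI (h ⊗ₜ I.mkQ y) = I.mkQ (h * y) := by
  simp [act, actL]

lemma act_one (hI : IsLeftIdealCoideal k H I) (q : H ⧸ I) : act hI ((1 : H) ⊗ₜ q) = q := by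
  obtain ⟨y, rfl⟩ := I.mkQ_surjective q
  rw [act_tmul_mk, one_mul]

lemma act_mul (hI : IsLeftIdealCoideal k H I) (a b : H) (q : H ⧸ I) :
    act hI ((a * b) ⊗ₜ q) = act hI (a ⊗ₜ act hI (b ⊗ₜ q)) := by
  obtain ⟨y, rfl⟩ := I.mkQ_surjective q
  rw [act_tmul_mk, act_tmul_mk, act_tmul_mk, mul_assoc]

/-- The diagonal action of `H` on `(H ⧸ I) ⊗ H`. -/
noncomputable def rho (hI : IsLeftIdealCoideal k H I) :
    H ⊗[k] ((H ⧸ I) ⊗[k] H) →ₗ[k] (H ⧸ I) ⊗[k] H :=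
  TensorProduct.map (act hI) (LinearMap.mul' k H)
    ∘ₗ (TensorProduct.tensorTensorTensorComm k H H (H ⧸ I) H).toLinearMap
    ∘ₗ LinearMap.rTensor ((H ⧸ I) ⊗[k] H) (comul : H →ₗ[k] H ⊗[k] H)

lemma rho_tmul' (hI : IsLeftIdealCoideal k H I) {a : H} (q : H ⧸ I) (c : H)
    {ι : Type*} {s : Finset ι} {u v : ι → H}
    (ha : (comul (R := k) a) = ∑ i ∈ s, u i ⊗ₜ[k] v i) :
    rho hI (a ⊗ₜ (q ⊗ₜ c))
      = ∑ i ∈ s, act hI (u i ⊗ₜ q) ⊗ₜ (v i * c) := by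
  simp only [rho, coe_comp, Function.comp_apply, rTensor_tmul, LinearEquiv.coe_coe, ha,
    sum_tmul, map_sum, tensorTensorTensorComm_tmul, map_tmul, mul'_apply]

lemma rho_one (hI : IsLeftIdealCoideal k H I) (m : (H ⧸ I) ⊗[k] H) :
    rho hI ((1 : H) ⊗ₜ m) = m := by
  induction m using TensorProduct.induction_on with
  | zero => simp
  | tmul q c =>
    simp only [rho, coe_comp, Function.comp_apply, rTensor_tmul, LinearEquiv.coe_coe,
      Bialgebra.comul_one, Algebra.TensorProduct.one_def, tensorTensorTensorComm_tmul,
      map_tmul, mul'_apply, one_mul, act_one]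
  | add u v hu hv => rw [tmul_add, map_add, hu, hv]

lemma rho_assoc (hI : IsLeftIdealCoideal k H I) (a b : H) (m : (H ⧸ I) ⊗[k] H) :
    rho hI ((a * b) ⊗ₜ m) = rho hI (a ⊗ₜ rho hI (b ⊗ₜ m)) := by
  induction m using TensorProduct.induction_on with
  | zero => simp
  | tmul q c =>
    set ra := ℛ k a
    set rb := ℛ k b
    rw [rho_tmul' hI q c (comul_mul_expand ra rb), Finset.sum_product, Finset.sum_comm,
      rho_tmul' hI q c rb.eq.symm, tmul_sum, map_sum]
    refine Finset.sum_congr rfl fun i _ => ?_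
    rw [rho_tmul' hI _ _ ra.eq.symm]
    refine Finset.sum_congr rfl fun j _ => ?_
    rw [act_mul, mul_assoc]
  | add u v hu hv => simp only [tmul_add, map_add, hu, hv]

lemma cotensorL_tmul' {a : H} (b : H) {ι : Type*} {s : Finset ι} {u v : ι → H}
    (ha : (comul (R := k) a) = ∑ i ∈ s, u i ⊗ₜ[k] v i) :
    cotensorL k H I (a ⊗ₜ b)
      = ∑ j ∈ s, u j ⊗ₜ (I.mkQ (v j) ⊗ₜ b) := by
  simp only [cotensorL, coe_comp, Function.comp_apply, map_tmul, LinearEquiv.coe_coe,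
    id_coe, id_eq, ha, sum_tmul, map_sum, assoc_tmul]

lemma cotensorR_tmul' (a : H) {b : H} {ι : Type*} {s : Finset ι} {u v : ι → H}
    (hb : (comul (R := k) b) = ∑ i ∈ s, u i ⊗ₜ[k] v i) :
    cotensorR k H I (a ⊗ₜ b)
      = ∑ j ∈ s, a ⊗ₜ (I.mkQ (u j) ⊗ₜ v j) := by
  simp only [cotensorR, map_tmul, coe_comp, Function.comp_apply, id_coe, id_eq, hb,
    map_sum, tmul_sum]

variable (I) in
lemma zeta_eq :
    zeta k H I = Tmap (LinearMap.mul' k H) LinearMap.id ∘ₗ lTensor H (coinv k H I).subtype := by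
  apply TensorProduct.ext'
  intro x b
  simp only [zeta, Tmap, coe_comp, Function.comp_apply, map_tmul, LinearEquiv.coe_coe,
    lTensor_tmul, rTensor_tmul, id_coe, id_eq, lTensor_id]
  rfl

lemma L3 (hI : IsLeftIdealCoideal k H I) :
    cotensorL k H I ∘ₗ Tmap (LinearMap.mul' k H) LinearMap.id
      = Tmap (rho hI) LinearMap.id ∘ₗ lTensor H (TensorProduct.mk k (H ⧸ I) H (I.mkQ 1)) := by
  apply TensorProduct.ext'
  intro x y
  set r := ℛ k x
  set r1 : (i : r.ι) → Repr k (r.left i) (H × H) := fun i => ℛ k (r.left i) with hr1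
  set r2 : (i : r.ι) → Repr k (r.right i) (H × H) := fun i => ℛ k (r.right i) with hr2
  have key := congrArg (lTensor H (TensorProduct.map I.mkQ (LinearMap.mulRight k y)))
    (sum_tmul_tmul_eq r r1 r2)
  simp only [map_sum, lTensor_tmul, map_tmul, mulRight_apply] at key
  calc (cotensorL k H I ∘ₗ Tmap (LinearMap.mul' k H) LinearMap.id) (x ⊗ₜ y)
      = ∑ i ∈ r.index, ∑ j ∈ (r1 i).index,
          (r1 i).left j ⊗ₜ (I.mkQ ((r1 i).right j) ⊗ₜ (r.right i * y)) := by
        rw [comp_apply, Tmap_tmul' _ _ x y r.eq.symm, map_sum]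
        refine Finset.sum_congr rfl fun i _ => ?_
        rw [show (LinearMap.id : H →ₗ[k] H) (r.right i) = r.right i from rfl, mul'_apply,
          cotensorL_tmul' _ (r1 i).eq.symm]
    _ = ∑ i ∈ r.index, ∑ j ∈ (r2 i).index,
          r.left i ⊗ₜ (I.mkQ ((r2 i).left j) ⊗ₜ ((r2 i).right j * y)) := key
    _ = (Tmap (rho hI) LinearMap.id ∘ₗ lTensor H (TensorProduct.mk k (H ⧸ I) H (I.mkQ 1)))
          (x ⊗ₜ y) := by
        rw [comp_apply, lTensor_tmul, mk_apply, Tmap_tmul' _ _ x _ r.eq.symm]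
        refine Finset.sum_congr rfl fun i _ => ?_
        rw [show (LinearMap.id : H →ₗ[k] H) (r.right i) = r.right i from rfl,
          rho_tmul' hI _ _ (r2 i).eq.symm, tmul_sum]
        refine Finset.sum_congr rfl fun j _ => ?_
        rw [act_tmul_mk, mul_one]

lemma L4 (hI : IsLeftIdealCoideal k H I) :
    cotensorR k H I ∘ₗ Tmap (LinearMap.mul' k H) LinearMap.id
      = Tmap (rho hI) LinearMap.id
          ∘ₗ lTensor H (TensorProduct.map I.mkQ (LinearMap.id : H →ₗ[k] H)
              ∘ₗ (Coalgebra.comul : H →ₗ[k] H ⊗[k] H)) := by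
  apply TensorProduct.ext'
  intro x y
  set r := ℛ k x
  set r2 : (i : r.ι) → Repr k (r.right i) (H × H) := fun i => ℛ k (r.right i) with hr2
  set ry := ℛ k y
  calc (cotensorR k H I ∘ₗ Tmap (LinearMap.mul' k H) LinearMap.id) (x ⊗ₜ y)
      = ∑ i ∈ r.index, ∑ j ∈ (r2 i).index, ∑ l ∈ ry.index,
          r.left i ⊗ₜ (I.mkQ ((r2 i).left j * ry.left l)
            ⊗ₜ ((r2 i).right j * ry.right l)) := by
        rw [comp_apply, Tmap_tmul' _ _ x y r.eq.symm, map_sum]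
        refine Finset.sum_congr rfl fun i _ => ?_
        rw [show (LinearMap.id : H →ₗ[k] H) (r.right i) = r.right i from rfl, mul'_apply,
          cotensorR_tmul' _ (comul_mul_expand (r2 i) ry), Finset.sum_product]
    _ = (Tmap (rho hI) LinearMap.id
          ∘ₗ lTensor H (TensorProduct.map I.mkQ (LinearMap.id : H →ₗ[k] H)
              ∘ₗ (Coalgebra.comul : H →ₗ[k] H ⊗[k] H))) (x ⊗ₜ y) := by
        rw [comp_apply, lTensor_tmul, comp_apply, ← ry.eq, map_sum,
          Tmap_tmul' _ _ x _ r.eq.symm]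
        refine Finset.sum_congr rfl fun i _ => ?_
        rw [show (LinearMap.id : H →ₗ[k] H) (r.right i) = r.right i from rfl, tmul_sum,
          map_sum, tmul_sum]
        rw [Finset.sum_comm]
        refine Finset.sum_congr rfl fun j _ => ?_
        rw [map_tmul, rho_tmul' hI _ _ (r2 i).eq.symm, tmul_sum]
        refine Finset.sum_congr rfl fun l _ => ?_
        rw [show (LinearMap.id : H →ₗ[k] H) (ry.right j) = ry.right j from rfl, act_tmul_mk]

end Concrete

/-- `ζ` is injective with image the cotensor product `H □^{H/I} H`,
hence a linear isomorphism `H ⊗ H^{co H/I} ≅ H □^{H/I} H`. -/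
theorem zeta_injective_range_eq_cotensor (k H : Type*) [Field k] [Ring H] [HopfAlgebra k H]
    (I : Submodule k H) (hI : IsLeftIdealCoideal k H I) :
    Function.Injective (zeta k H I) ∧ LinearMap.range (zeta k H I) = cotensor k H I := by
  classical
  have hone : ∀ m : H, LinearMap.mul' k H ((1 : H) ⊗ₜ[k] m) = m := fun m => by simp
  have hassoc : ∀ a b m : H, LinearMap.mul' k H ((a * b) ⊗ₜ[k] m)
      = LinearMap.mul' k H (a ⊗ₜ[k] LinearMap.mul' k H (b ⊗ₜ[k] m)) := fun a b m => by
    simp [mul_assoc]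
  set S := HopfAlgebra.antipode (R := k) (A := H) with hS
  set zeta' := Tmap (LinearMap.mul' k H) (LinearMap.id : H →ₗ[k] H) with hzeta'
  have hφζ : Tmap (LinearMap.mul' k H) S ∘ₗ zeta' = LinearMap.id :=
    Tmap_antipode_id _ hone hassoc
  have hζφ : zeta' ∘ₗ Tmap (LinearMap.mul' k H) S = LinearMap.id :=
    Tmap_id_antipode _ hone hassoc
  have hζ'li : ∀ z, Tmap (LinearMap.mul' k H) S (zeta' z) = z := fun z => by
    simpa using LinearMap.congr_fun hφζ z
  have hζ'inj : Function.Injective zeta' := fun u v huv => by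
    rw [← hζ'li u, ← hζ'li v, huv]
  set ι := (coinv k H I).subtype with hι
  have hzeta : zeta k H I = zeta' ∘ₗ LinearMap.lTensor H ι := zeta_eq I
  set cmap := (TensorProduct.map I.mkQ (LinearMap.id : H →ₗ[k] H)
      ∘ₗ (Coalgebra.comul : H →ₗ[k] H ⊗[k] H)) - TensorProduct.mk k (H ⧸ I) H (I.mkQ 1)
    with hcmap
  have hEK : Tmap (rho hI) S ∘ₗ Tmap (rho hI) LinearMap.id = LinearMap.id :=
    Tmap_antipode_id _ (rho_one hI) (rho_assoc hI)
  have hD : (cotensorL k H I - cotensorR k H I) ∘ₗ zeta'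
      = -(Tmap (rho hI) LinearMap.id ∘ₗ LinearMap.lTensor H cmap) := by
    rw [LinearMap.sub_comp, L3 hI, L4 hI, hcmap, LinearMap.lTensor_sub, LinearMap.comp_sub]
    abel
  constructor
  · rw [hzeta, LinearMap.coe_comp]
    exact hζ'inj.comp
      (Module.Flat.lTensor_preserves_injective_linearMap ι (Submodule.injective_subtype _))
  · apply le_antisymm
    · rintro z ⟨w, rfl⟩
      show zeta k H I w ∈ cotensor k H I
      rw [cotensor, LinearMap.mem_ker, hzeta]
      have hzero : cmap ∘ₗ ι = 0 := by ext b; exact b.2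
      have hcomp : (cotensorL k H I - cotensorR k H I) ∘ₗ (zeta' ∘ₗ LinearMap.lTensor H ι)
          = 0 := by
        rw [← LinearMap.comp_assoc, hD, LinearMap.neg_comp, LinearMap.comp_assoc,
          ← LinearMap.lTensor_comp, hzero, LinearMap.lTensor_zero, LinearMap.comp_zero]
        abel
      simpa using LinearMap.congr_fun hcomp w
    · intro z hz
      rw [cotensor, LinearMap.mem_ker] at hz
      set w := Tmap (LinearMap.mul' k H) S z with hw
      have hzw : zeta' w = z := by
        rw [hw, ← LinearMap.comp_apply, hζφ, LinearMap.id_apply]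
      have hcw : LinearMap.lTensor H cmap w = 0 := by
        have h1 := LinearMap.congr_fun hD w
        simp only [LinearMap.comp_apply, LinearMap.neg_apply] at h1
        rw [hzw, hz] at h1
        have h2 : Tmap (rho hI) LinearMap.id (LinearMap.lTensor H cmap w) = 0 :=
          neg_eq_zero.mp h1.symm
        have h4 := LinearMap.congr_fun hEK (LinearMap.lTensor H cmap w)
        simp only [LinearMap.comp_apply, LinearMap.id_apply] at h4
        rw [← h4, h2, map_zero]
      have hexact : Function.Exact (LinearMap.lTensor H ι) (LinearMap.lTensor H cmap) :=
        Module.Flat.lTensor_exact H (LinearMap.exact_subtype_ker_map cmap)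
      obtain ⟨w', hw'⟩ := (hexact w).mp hcw
      exact ⟨w', by rw [hzeta, LinearMap.comp_apply, hw', hzw]⟩

end HopfGalois
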